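/- arXiv:2011.01392 — 3 statements merged into one kernel-verified Lean document; each statement's English description precedes it below -/
import Mathlib

section
/- In the mobility-driven epidemic model, the number of hospitalized individuals H(t) at any time t ≥ 0 is a posynomial function of the control variables: for each t there is a posynomial p on ℝ_{>0}^{K·t} (in the K·t variables given by the entries of u(0),…,u(t−1)) such that H(t) = p(u(0),…,u(t−1)) for all positive control sequences. -/
/-- A posynomial on the positive orthant: a finite sum of one or more monomials
`c_i * ∏_j x_j ^ a_{i,j}` with positive coefficients and real exponents. -/
def IsPosynomial {ι : Type*} [Fintype ι] (f : (ι → ℝ) → ℝ) : Prop :=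
  ∃ k : ℕ, 0 < k ∧ ∃ (c : Fin k → ℝ) (a : Fin k → ι → ℝ),
    (∀ i, 0 < c i) ∧
    ∀ x : ι → ℝ, (∀ j, 0 < x j) → f x = ∑ i, c i * ∏ j, x j ^ a i j

/-- The state `(E(t), I(t), A(t), H(t))` of the mobility-driven epidemic model, where
the infection rate at time `t` is `β(t) = Σ_k θ_k (u_k(t))^(α_k) + b`. -/
noncomputable def epiState (K : ℕ) (θ a : Fin K → ℝ)
    (b S0 γA ρEI ρEA ρIR ρIH ρAR ρHR ρHD E0 I0 A0 H0 : ℝ)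
    (u : ℕ → Fin K → ℝ) : ℕ → ℝ × ℝ × ℝ × ℝ
  | 0 => (E0, I0, A0, H0)
  | t + 1 =>
    let s := epiState K θ a b S0 γA ρEI ρEA ρIR ρIH ρAR ρHR ρHD E0 I0 A0 H0 u t
    let β : ℝ := (∑ k, θ k * u t k ^ a k) + b
    ((1 - ρEI - ρEA) * s.1 + S0 * β * (γA * s.2.2.1 + s.2.1),
     (1 - ρIR - ρIH) * s.2.1 + ρEI * s.1,
     (1 - ρAR) * s.2.2.1 + ρEA * s.1,
     (1 - ρHR - ρHD) * s.2.2.2 + ρIH * s.2.1)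

/-- The cumulative deaths `D(t)` of the mobility-driven epidemic model:
`D(t+1) = D(t) + α_D ρ_HR H(t)`. -/
noncomputable def epiD (K : ℕ) (θ a : Fin K → ℝ)
    (b S0 γA ρEI ρEA ρIR ρIH ρAR ρHR ρHD E0 I0 A0 H0 αD D0 : ℝ)
    (u : ℕ → Fin K → ℝ) : ℕ → ℝ
  | 0 => D0
  | t + 1 => epiD K θ a b S0 γA ρEI ρEA ρIR ρIH ρAR ρHR ρHD E0 I0 A0 H0 αD D0 u t +
      αD * ρHR * (epiState K θ a b S0 γA ρEI ρEA ρIR ρIH ρAR ρHR ρHD E0 I0 A0 H0 u t).2.2.2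

section Aux

lemma isPosy_const {ι : Type*} [Fintype ι] {c : ℝ} (hc : 0 < c) :
    IsPosynomial (fun _ : ι → ℝ => c) := by
  refine ⟨1, one_pos, fun _ => c, fun _ _ => 0, fun _ => hc, fun x hx => ?_⟩
  simp

lemma isPosy_add {ι : Type*} [Fintype ι] {f g : (ι → ℝ) → ℝ}
    (hf : IsPosynomial f) (hg : IsPosynomial g) :
    IsPosynomial (fun x => f x + g x) := by
  obtain ⟨k1, hk1, c1, a1, hc1, he1⟩ := hf
  obtain ⟨k2, hk2, c2, a2, hc2, he2⟩ := hg
  refine ⟨k1 + k2, by omega, Fin.append c1 c2, Fin.append a1 a2, ?_, fun x hx => ?_⟩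
  · intro i
    refine Fin.addCases (fun i => ?_) (fun i => ?_) i
    · simpa using hc1 i
    · simpa using hc2 i
  · show f x + g x = _
    rw [he1 x hx, he2 x hx, Fin.sum_univ_add]
    simp

lemma isPosy_smul {ι : Type*} [Fintype ι] {c : ℝ} (hc : 0 < c) {f : (ι → ℝ) → ℝ}
    (hf : IsPosynomial f) : IsPosynomial (fun x => c * f x) := by
  obtain ⟨k, hk, cs, a, hcs, he⟩ := hf
  refine ⟨k, hk, fun i => c * cs i, a, fun i => mul_pos hc (hcs i), fun x hx => ?_⟩
  show c * f x = _
  rw [he x hx, Finset.mul_sum]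
  simp [mul_assoc]

lemma isPosy_mul {ι : Type*} [Fintype ι] {f g : (ι → ℝ) → ℝ}
    (hf : IsPosynomial f) (hg : IsPosynomial g) :
    IsPosynomial (fun x => f x * g x) := by
  obtain ⟨k1, hk1, c1, a1, hc1, he1⟩ := hf
  obtain ⟨k2, hk2, c2, a2, hc2, he2⟩ := hg
  refine ⟨k1 * k2, Nat.mul_pos hk1 hk2,
    fun i => c1 (finProdFinEquiv.symm i).1 * c2 (finProdFinEquiv.symm i).2,
    fun i j => a1 (finProdFinEquiv.symm i).1 j + a2 (finProdFinEquiv.symm i).2 j,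
    fun i => mul_pos (hc1 _) (hc2 _), fun x hx => ?_⟩
  have key : ∀ (i1 : Fin k1) (i2 : Fin k2),
      ∏ j, x j ^ (a1 i1 j + a2 i2 j) = (∏ j, x j ^ a1 i1 j) * (∏ j, x j ^ a2 i2 j) := by
    intro i1 i2
    rw [← Finset.prod_mul_distrib]
    exact Finset.prod_congr rfl fun j _ => Real.rpow_add (hx j) _ _
  show f x * g x = ∑ i : Fin (k1 * k2),
      (c1 (finProdFinEquiv.symm i).1 * c2 (finProdFinEquiv.symm i).2) *
        ∏ j, x j ^ (a1 (finProdFinEquiv.symm i).1 j + a2 (finProdFinEquiv.symm i).2 j)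
  rw [he1 x hx, he2 x hx, Finset.sum_mul_sum,
    Equiv.sum_comp finProdFinEquiv.symm
      (fun p : Fin k1 × Fin k2 => (c1 p.1 * c2 p.2) * ∏ j, x j ^ (a1 p.1 j + a2 p.2 j)),
    Fintype.sum_prod_type]
  refine Finset.sum_congr rfl fun i1 _ => Finset.sum_congr rfl fun i2 _ => ?_
  rw [key]
  ring

lemma isPosy_comp {t K : ℕ} {f : (Fin t × Fin K → ℝ) → ℝ} (hf : IsPosynomial f) :
    IsPosynomial (fun x : Fin (t + 1) × Fin K → ℝ => f (fun q => x (q.1.castSucc, q.2))) := by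
  obtain ⟨k, hk, c, a, hc, he⟩ := hf
  refine ⟨k, hk, c,
    fun i q => if h : (q.1 : ℕ) < t then a i (⟨q.1, h⟩, q.2) else 0, hc, fun x hx => ?_⟩
  show f (fun q => x (q.1.castSucc, q.2)) = _
  rw [he _ (fun q => hx _)]
  refine Finset.sum_congr rfl fun i _ => ?_
  congr 1
  rw [Fintype.prod_prod_type, Fintype.prod_prod_type, Fin.prod_univ_castSucc]
  have h1 : ∀ (s : Fin t) (k' : Fin K),
      x (s.castSucc, k') ^ (if h : ((s.castSucc : Fin (t+1)) : ℕ) < t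
          then a i (⟨(s.castSucc : Fin (t+1)), h⟩, k') else 0)
        = x (s.castSucc, k') ^ a i (s, k') := by
    intro s k'
    rw [dif_pos (by simpa using s.isLt)]
    congr 2
  have h2 : ∀ k' : Fin K,
      x (Fin.last t, k') ^ (if h : ((Fin.last t : Fin (t+1)) : ℕ) < t
          then a i (⟨(Fin.last t : Fin (t+1)), h⟩, k') else 0) = 1 := by
    intro k'
    rw [dif_neg (by simp), Real.rpow_zero]
  simp only [h1, h2, Finset.prod_const_one, mul_one]

lemma isPosy_beta (t K : ℕ) (θ a : Fin K → ℝ) (b : ℝ) (hθ : ∀ k, 0 < θ k) (hb : 0 < b) :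
    IsPosynomial (fun x : Fin (t + 1) × Fin K → ℝ =>
      (∑ k, θ k * x (Fin.last t, k) ^ a k) + b) := by
  refine ⟨K + 1, Nat.succ_pos _, Fin.snoc θ b,
    Fin.snoc (fun k q => if q = (Fin.last t, k) then a k else 0) 0, ?_, fun x hx => ?_⟩
  · intro i
    refine Fin.lastCases ?_ (fun i => ?_) i
    · simpa using hb
    · simpa using hθ i
  · rw [Fin.sum_univ_castSucc]
    simp only [Fin.snoc_castSucc, Fin.snoc_last]
    congr 1
    · refine Finset.sum_congr rfl fun k _ => ?_
      congr 1
      rw [Finset.prod_eq_single ((Fin.last t, k) : Fin (t+1) × Fin K)]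
      · simp
      · intro q _ hq
        rw [if_neg hq, Real.rpow_zero]
      · simp
    · simp

lemma epi_all_posy (K : ℕ) (θ a : Fin K → ℝ)
    (b S0 γA ρEI ρEA ρIR ρIH ρAR ρHR ρHD E0 I0 A0 H0 : ℝ)
    (hθ : ∀ k, 0 < θ k) (hb : 0 < b) (hS0 : 0 < S0) (hγA : 0 < γA)
    (hρEI : 0 < ρEI) (hρEA : 0 < ρEA) (hρIH : 0 < ρIH)
    (hEsum : ρEI + ρEA < 1) (hIsum : ρIR + ρIH < 1) (hAsum : ρAR < 1)
    (hHsum : ρHR + ρHD < 1)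
    (hE0 : 0 < E0) (hI0 : 0 < I0) (hA0 : 0 < A0) (hH0 : 0 < H0)
    (t : ℕ) :
    ∃ pE pI pA pH : (Fin t × Fin K → ℝ) → ℝ,
      IsPosynomial pE ∧ IsPosynomial pI ∧ IsPosynomial pA ∧ IsPosynomial pH ∧
      ∀ u : ℕ → Fin K → ℝ, (∀ s k, 0 < u s k) →
        (epiState K θ a b S0 γA ρEI ρEA ρIR ρIH ρAR ρHR ρHD E0 I0 A0 H0 u t).1
            = pE (fun q => u (q.1 : ℕ) q.2) ∧
        (epiState K θ a b S0 γA ρEI ρEA ρIR ρIH ρAR ρHR ρHD E0 I0 A0 H0 u t).2.1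
            = pI (fun q => u (q.1 : ℕ) q.2) ∧
        (epiState K θ a b S0 γA ρEI ρEA ρIR ρIH ρAR ρHR ρHD E0 I0 A0 H0 u t).2.2.1
            = pA (fun q => u (q.1 : ℕ) q.2) ∧
        (epiState K θ a b S0 γA ρEI ρEA ρIR ρIH ρAR ρHR ρHD E0 I0 A0 H0 u t).2.2.2
            = pH (fun q => u (q.1 : ℕ) q.2) := by
  induction t with
  | zero =>
    exact ⟨fun _ => E0, fun _ => I0, fun _ => A0, fun _ => H0,
      isPosy_const hE0, isPosy_const hI0, isPosy_const hA0, isPosy_const hH0,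
      fun u hu => ⟨rfl, rfl, rfl, rfl⟩⟩
  | succ t ih =>
    obtain ⟨pE, pI, pA, pH, hpE, hpI, hpA, hpH, heq⟩ := ih
    set L : ((Fin t × Fin K → ℝ) → ℝ) → (Fin (t + 1) × Fin K → ℝ) → ℝ :=
      fun p x => p (fun q => x (q.1.castSucc, q.2)) with hL
    set β : (Fin (t + 1) × Fin K → ℝ) → ℝ :=
      fun x => (∑ k, θ k * x (Fin.last t, k) ^ a k) + b with hβ
    have hβp : IsPosynomial β := isPosy_beta t K θ a b hθ hb
    refine ⟨fun x => (1 - ρEI - ρEA) * L pE x + S0 * (β x * (γA * L pA x + L pI x)),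
      fun x => (1 - ρIR - ρIH) * L pI x + ρEI * L pE x,
      fun x => (1 - ρAR) * L pA x + ρEA * L pE x,
      fun x => (1 - ρHR - ρHD) * L pH x + ρIH * L pI x, ?_, ?_, ?_, ?_, ?_⟩
    · exact isPosy_add (isPosy_smul (by linarith) (isPosy_comp hpE))
        (isPosy_smul hS0 (isPosy_mul hβp
          (isPosy_add (isPosy_smul hγA (isPosy_comp hpA)) (isPosy_comp hpI))))
    · exact isPosy_add (isPosy_smul (by linarith) (isPosy_comp hpI))
        (isPosy_smul hρEI (isPosy_comp hpE))
    · exact isPosy_add (isPosy_smul (by linarith) (isPosy_comp hpA))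
        (isPosy_smul hρEA (isPosy_comp hpE))
    · exact isPosy_add (isPosy_smul (by linarith) (isPosy_comp hpH))
        (isPosy_smul hρIH (isPosy_comp hpI))
    · intro u hu
      obtain ⟨hE, hI, hA, hH⟩ := heq u hu
      have hres : (fun q : Fin t × Fin K =>
          (fun q' : Fin (t + 1) × Fin K => u (q'.1 : ℕ) q'.2) (q.1.castSucc, q.2))
            = fun q : Fin t × Fin K => u (q.1 : ℕ) q.2 := by
        funext q
        simp
      have hβv : β (fun q' : Fin (t + 1) × Fin K => u (q'.1 : ℕ) q'.2)
          = (∑ k, θ k * u t k ^ a k) + b := by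
        simp [hβ]
      simp only [epiState, hL, hres, hβv]
      refine ⟨?_, ?_, ?_, ?_⟩ <;> simp only [hE, hI, hA, hH] <;> ring

end Aux

/-- In the mobility-driven epidemic model, the number of hospitalized individuals `H(t)`
is a posynomial function of the `K·t` control variables (the entries of
`u(0), …, u(t-1)`), for every positive control sequence. -/
theorem hospitalizations_isPosynomial (K : ℕ) (θ a : Fin K → ℝ)
    (b S0 γA ρEI ρEA ρIR ρIH ρAR ρHR ρHD E0 I0 A0 H0 : ℝ)
    (hθ : ∀ k, 0 < θ k) (hb : 0 < b) (hS0 : 0 < S0) (hγA : 0 < γA)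
    (hρEI : 0 < ρEI) (hρEA : 0 < ρEA) (hρIR : 0 < ρIR) (hρIH : 0 < ρIH)
    (hρAR : 0 < ρAR) (hρHR : 0 < ρHR) (hρHD : 0 < ρHD)
    (hEsum : ρEI + ρEA < 1) (hIsum : ρIR + ρIH < 1) (hAsum : ρAR < 1)
    (hHsum : ρHR + ρHD < 1)
    (hE0 : 0 < E0) (hI0 : 0 < I0) (hA0 : 0 < A0) (hH0 : 0 < H0)
    (t : ℕ) :
    ∃ p : (Fin t × Fin K → ℝ) → ℝ, IsPosynomial p ∧
      ∀ u : ℕ → Fin K → ℝ, (∀ s k, 0 < u s k) →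
        (epiState K θ a b S0 γA ρEI ρEA ρIR ρIH ρAR ρHR ρHD E0 I0 A0 H0 u t).2.2.2 =
          p (fun q => u (q.1 : ℕ) q.2) := by
  obtain ⟨pE, pI, pA, pH, hpE, hpI, hpA, hpH, heq⟩ :=
    epi_all_posy K θ a b S0 γA ρEI ρEA ρIR ρIH ρAR ρHR ρHD E0 I0 A0 H0
      hθ hb hS0 hγA hρEI hρEA hρIH hEsum hIsum hAsum hHsum hE0 hI0 hA0 hH0 t
  exact ⟨pH, hpH, fun u hu => (heq u hu).2.2.2⟩
end

section
/- In the mobility-driven epidemic model, the cumulative number of deaths D(t) at any time t ≥ 0 is a posynomial function of the control variables: for each t there is a posynomial p on ℝ_{>0}^{K·t} (in the K·t variables given by the entries of u(0),…,u(t−1)) such that D(t) = p(u(0),…,u(t−1)) for all positive control sequences, where D evolves as D(t+1) = D(t) + α_D ρ_HR H(t) with α_D > 0 and initial condition D(0) > 0. -/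
section helpers
variable {ι : Type*} [Fintype ι]

lemma isPosynomial_const (c : ℝ) (hc : 0 < c) :
    IsPosynomial (fun _ : ι → ℝ => c) := by
  refine ⟨1, one_pos, fun _ => c, fun _ _ => 0, fun _ => hc, ?_⟩
  intro x hx
  simp [Real.rpow_zero]

lemma IsPosynomial.add {f g : (ι → ℝ) → ℝ} (hf : IsPosynomial f) (hg : IsPosynomial g) :
    IsPosynomial (fun x => f x + g x) := by
  obtain ⟨k1, hk1, c1, a1, hc1, hf⟩ := hf
  obtain ⟨k2, hk2, c2, a2, hc2, hg⟩ := hg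
  refine ⟨k1 + k2, by positivity,
    fun i => Sum.elim c1 c2 (finSumFinEquiv.symm i),
    fun i => Sum.elim a1 a2 (finSumFinEquiv.symm i), ?_, ?_⟩
  · intro i
    dsimp only
    rcases finSumFinEquiv.symm i with j | j
    · exact hc1 j
    · exact hc2 j
  · intro x hx
    dsimp only
    rw [hf x hx, hg x hx, ← Equiv.sum_comp finSumFinEquiv
      (fun i => Sum.elim c1 c2 (finSumFinEquiv.symm i) *
        ∏ j, x j ^ Sum.elim a1 a2 (finSumFinEquiv.symm i) j)]
    simp [Fintype.sum_sum_type]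

lemma IsPosynomial.mul {f g : (ι → ℝ) → ℝ} (hf : IsPosynomial f) (hg : IsPosynomial g) :
    IsPosynomial (fun x => f x * g x) := by
  obtain ⟨k1, hk1, c1, a1, hc1, hf⟩ := hf
  obtain ⟨k2, hk2, c2, a2, hc2, hg⟩ := hg
  refine ⟨k1 * k2, by positivity,
    fun i => c1 (finProdFinEquiv.symm i).1 * c2 (finProdFinEquiv.symm i).2,
    fun i j => a1 (finProdFinEquiv.symm i).1 j + a2 (finProdFinEquiv.symm i).2 j, ?_, ?_⟩
  · intro i
    dsimp only
    exact mul_pos (hc1 _) (hc2 _)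
  · intro x hx
    dsimp only
    rw [hf x hx, hg x hx, Finset.sum_mul_sum,
      ← Equiv.sum_comp finProdFinEquiv
      (fun i => (c1 (finProdFinEquiv.symm i).1 * c2 (finProdFinEquiv.symm i).2) *
        ∏ j, x j ^ (a1 (finProdFinEquiv.symm i).1 j + a2 (finProdFinEquiv.symm i).2 j))]
    rw [Fintype.sum_prod_type]
    refine Finset.sum_congr rfl fun i _ => Finset.sum_congr rfl fun i' _ => ?_
    simp only [Equiv.symm_apply_apply]
    have : ∀ j : ι, x j ^ (a1 i j + a2 i' j) = x j ^ a1 i j * x j ^ a2 i' j :=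
      fun j => Real.rpow_add (hx j) _ _
    simp only [this]
    rw [Finset.prod_mul_distrib]
    ring

lemma isPosynomial_monomial (c : ℝ) (hc : 0 < c) (j0 : ι) (e : ℝ) :
    IsPosynomial (fun x : ι → ℝ => c * x j0 ^ e) := by
  classical
  refine ⟨1, one_pos, fun _ => c, fun _ j => if j = j0 then e else 0, fun _ => hc, ?_⟩
  intro x hx
  have : ∀ j : ι, x j ^ (if j = j0 then e else 0) = if j = j0 then x j0 ^ e else 1 := by
    intro j
    split <;> rename_i h
    · rw [h]
    · rw [Real.rpow_zero]
  simp only [this, Finset.sum_const, Finset.card_univ, Fintype.card_fin, one_smul]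
  rw [Finset.prod_ite_eq' Finset.univ j0 (fun _ => x j0 ^ e)]
  simp

lemma IsPosynomial.comp {ι' : Type*} [Fintype ι'] {f : (ι → ℝ) → ℝ}
    (hf : IsPosynomial f) (g : ι → ι') (hg : Function.Injective g) :
    IsPosynomial (fun x : ι' → ℝ => f (fun j => x (g j))) := by
  classical
  obtain ⟨k, hk, c, a, hc, hf⟩ := hf
  refine ⟨k, hk, c, fun i => Function.extend g (a i) 0, hc, ?_⟩
  intro x hx
  dsimp only
  rw [hf _ (fun j => hx (g j))]
  refine Finset.sum_congr rfl fun i _ => ?_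
  congr 1
  rw [← Finset.prod_subset (Finset.subset_univ (Finset.univ.image g))
    (fun j' _ hj' => ?_), Finset.prod_image (fun j _ j' _ h => hg h)]
  · exact Finset.prod_congr rfl fun j _ => by rw [hg.extend_apply]
  · rw [Function.extend_apply', Pi.zero_apply, Real.rpow_zero]
    intro ⟨j, hj⟩
    exact hj' (Finset.mem_image.mpr ⟨j, Finset.mem_univ j, hj⟩)

lemma isPosynomial_beta {K : ℕ} (θ a : Fin K → ℝ) (hθ : ∀ k, 0 < θ k)
    (b : ℝ) (hb : 0 < b) (g : Fin K → ι) :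
    IsPosynomial (fun x : ι → ℝ => (∑ k, θ k * x (g k) ^ a k) + b) := by
  classical
  have : ∀ s : Finset (Fin K),
      IsPosynomial (fun x : ι → ℝ => (∑ k ∈ s, θ k * x (g k) ^ a k) + b) := by
    intro s
    induction s using Finset.induction_on with
    | empty => simpa using isPosynomial_const b hb
    | insert k s hns ih =>
      have := (isPosynomial_monomial (θ k) (hθ k) (g k) (a k)).add ih
      simpa [Finset.sum_insert hns, add_assoc] using this
  exact this Finset.univ

end helpers

lemma states_posy (K : ℕ) (θ a : Fin K → ℝ)
    (b S0 γA ρEI ρEA ρIR ρIH ρAR ρHR ρHD E0 I0 A0 H0 : ℝ)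
    (hθ : ∀ k, 0 < θ k) (hb : 0 < b) (hS0 : 0 < S0) (hγA : 0 < γA)
    (hρEI : 0 < ρEI) (hρEA : 0 < ρEA) (hρIH : 0 < ρIH)
    (hcE : 0 < 1 - ρEI - ρEA) (hcI : 0 < 1 - ρIR - ρIH)
    (hcA : 0 < 1 - ρAR) (hcH : 0 < 1 - ρHR - ρHD)
    (hE0 : 0 < E0) (hI0 : 0 < I0) (hA0 : 0 < A0) (hH0 : 0 < H0) :
    ∀ t : ℕ, ∃ pE pI pA pH : (Fin t × Fin K → ℝ) → ℝ,
      IsPosynomial pE ∧ IsPosynomial pI ∧ IsPosynomial pA ∧ IsPosynomial pH ∧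
      ∀ u : ℕ → Fin K → ℝ, (∀ s k, 0 < u s k) →
        (epiState K θ a b S0 γA ρEI ρEA ρIR ρIH ρAR ρHR ρHD E0 I0 A0 H0 u t).1
            = pE (fun q => u (q.1 : ℕ) q.2) ∧
        (epiState K θ a b S0 γA ρEI ρEA ρIR ρIH ρAR ρHR ρHD E0 I0 A0 H0 u t).2.1
            = pI (fun q => u (q.1 : ℕ) q.2) ∧
        (epiState K θ a b S0 γA ρEI ρEA ρIR ρIH ρAR ρHR ρHD E0 I0 A0 H0 u t).2.2.1
            = pA (fun q => u (q.1 : ℕ) q.2) ∧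
        (epiState K θ a b S0 γA ρEI ρEA ρIR ρIH ρAR ρHR ρHD E0 I0 A0 H0 u t).2.2.2
            = pH (fun q => u (q.1 : ℕ) q.2) := by
  intro t
  induction t with
  | zero =>
    exact ⟨fun _ => E0, fun _ => I0, fun _ => A0, fun _ => H0,
      isPosynomial_const E0 hE0, isPosynomial_const I0 hI0,
      isPosynomial_const A0 hA0, isPosynomial_const H0 hH0,
      fun u hu => ⟨rfl, rfl, rfl, rfl⟩⟩
  | succ t ih =>
    obtain ⟨pE, pI, pA, pH, hpE, hpI, hpA, hpH, heq⟩ := ih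
    set g : Fin t × Fin K → Fin (t + 1) × Fin K :=
      fun q => (q.1.castSucc, q.2) with hgdef
    have hg : Function.Injective g := by
      intro q q' h
      simp only [hgdef, Prod.mk.injEq, Fin.castSucc_inj] at h
      exact Prod.ext h.1 h.2
    have hβ : IsPosynomial (fun x : Fin (t + 1) × Fin K → ℝ =>
        (∑ k, θ k * x (Fin.last t, k) ^ a k) + b) :=
      isPosynomial_beta θ a hθ b hb (fun k => (Fin.last t, k))
    refine ⟨fun x => (1 - ρEI - ρEA) * pE (fun q => x (g q)) +
        S0 * ((∑ k, θ k * x (Fin.last t, k) ^ a k) + b) *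
          (γA * pA (fun q => x (g q)) + pI (fun q => x (g q))),
      fun x => (1 - ρIR - ρIH) * pI (fun q => x (g q)) + ρEI * pE (fun q => x (g q)),
      fun x => (1 - ρAR) * pA (fun q => x (g q)) + ρEA * pE (fun q => x (g q)),
      fun x => (1 - ρHR - ρHD) * pH (fun q => x (g q)) + ρIH * pI (fun q => x (g q)),
      ?_, ?_, ?_, ?_, ?_⟩
    · exact (((isPosynomial_const _ hcE).mul (hpE.comp g hg)).add
        (((isPosynomial_const _ hS0).mul hβ).mul
          (((isPosynomial_const _ hγA).mul (hpA.comp g hg)).add (hpI.comp g hg))))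
    · exact ((isPosynomial_const _ hcI).mul (hpI.comp g hg)).add
        ((isPosynomial_const _ hρEI).mul (hpE.comp g hg))
    · exact ((isPosynomial_const _ hcA).mul (hpA.comp g hg)).add
        ((isPosynomial_const _ hρEA).mul (hpE.comp g hg))
    · exact ((isPosynomial_const _ hcH).mul (hpH.comp g hg)).add
        ((isPosynomial_const _ hρIH).mul (hpI.comp g hg))
    · intro u hu
      obtain ⟨hE, hI, hA, hH⟩ := heq u hu
      have hcomp : (fun q : Fin t × Fin K =>
          (fun q' : Fin (t + 1) × Fin K => u (q'.1 : ℕ) q'.2) (g q))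
          = fun q : Fin t × Fin K => u (q.1 : ℕ) q.2 := by
        funext q
        simp [hgdef]
      refine ⟨?_, ?_, ?_, ?_⟩ <;>
        simp only [epiState, hcomp, hE, hI, hA, hH, Fin.val_last]

/-- In the mobility-driven epidemic model, the cumulative number of deaths `D(t)`
is a posynomial function of the `K·t` control variables (the entries of
`u(0), …, u(t-1)`), for every positive control sequence. -/
theorem deaths_isPosynomial (K : ℕ) (θ a : Fin K → ℝ)
    (b S0 γA ρEI ρEA ρIR ρIH ρAR ρHR ρHD E0 I0 A0 H0 αD D0 : ℝ)
    (hθ : ∀ k, 0 < θ k) (hb : 0 < b) (hS0 : 0 < S0) (hγA : 0 < γA)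
    (hρEI : 0 < ρEI) (hρEA : 0 < ρEA) (hρIR : 0 < ρIR) (hρIH : 0 < ρIH)
    (hρAR : 0 < ρAR) (hρHR : 0 < ρHR) (hρHD : 0 < ρHD)
    (hEsum : ρEI + ρEA < 1) (hIsum : ρIR + ρIH < 1) (hAsum : ρAR < 1)
    (hHsum : ρHR + ρHD < 1)
    (hE0 : 0 < E0) (hI0 : 0 < I0) (hA0 : 0 < A0) (hH0 : 0 < H0)
    (hαD : 0 < αD) (hD0 : 0 < D0)
    (t : ℕ) :
    ∃ p : (Fin t × Fin K → ℝ) → ℝ, IsPosynomial p ∧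
      ∀ u : ℕ → Fin K → ℝ, (∀ s k, 0 < u s k) →
        epiD K θ a b S0 γA ρEI ρEA ρIR ρIH ρAR ρHR ρHD E0 I0 A0 H0 αD D0 u t =
          p (fun q => u (q.1 : ℕ) q.2) := by
  have hcE : 0 < 1 - ρEI - ρEA := by linarith
  have hcI : 0 < 1 - ρIR - ρIH := by linarith
  have hcA : 0 < 1 - ρAR := by linarith
  have hcH : 0 < 1 - ρHR - ρHD := by linarith
  induction t with
  | zero => exact ⟨fun _ => D0, isPosynomial_const D0 hD0, fun u hu => rfl⟩
  | succ t ih =>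
    obtain ⟨pD, hpD, hD⟩ := ih
    obtain ⟨pE, pI, pA, pH, hpE, hpI, hpA, hpH, heq⟩ :=
      states_posy K θ a b S0 γA ρEI ρEA ρIR ρIH ρAR ρHR ρHD E0 I0 A0 H0
        hθ hb hS0 hγA hρEI hρEA hρIH hcE hcI hcA hcH hE0 hI0 hA0 hH0 t
    set g : Fin t × Fin K → Fin (t + 1) × Fin K :=
      fun q => (q.1.castSucc, q.2) with hgdef
    have hg : Function.Injective g := by
      intro q q' h
      simp only [hgdef, Prod.mk.injEq, Fin.castSucc_inj] at h
      exact Prod.ext h.1 h.2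
    refine ⟨fun x => pD (fun q => x (g q)) + (αD * ρHR) * pH (fun q => x (g q)),
      (hpD.comp g hg).add
        ((isPosynomial_const _ (by positivity)).mul (hpH.comp g hg)), ?_⟩
    intro u hu
    have hcomp : (fun q : Fin t × Fin K =>
        (fun q' : Fin (t + 1) × Fin K => u (q'.1 : ℕ) q'.2) (g q))
        = fun q : Fin t × Fin K => u (q.1 : ℕ) q.2 := by
      funext q
      simp [hgdef]
    obtain ⟨-, -, -, hH⟩ := heq u hu
    simp only [epiD, hcomp, hD u hu, hH]
end

section
/- In the mobility-driven epidemic model, the discounted-death objective is convex in the logarithm of the controls: with γ_D ∈ (0,1) and γ_∞ > 0, the function G : ℝ^{K·T} → ℝ defined by G(v) = log( Σ_{t=1}^{T−1} γ_D^t D(t) + γ_∞ D(T) ), where the states are evaluated at the controls u(s) = exp(v(s)) (componentwise exponential, s = 0,…,T−1), is convex on ℝ^{K·T}. -/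
open Real

section SEA
variable {n : Type*} [Fintype n]

/-- Sums/products of positive multiples of exponentials of linear functions. -/
inductive SEA : ((n → ℝ) → ℝ) → Prop
  | expAffine (c : ℝ) (hc : 0 < c) (w : n → ℝ) :
      SEA (fun v => c * Real.exp (∑ j, w j * v j))
  | add {f g} : SEA f → SEA g → SEA (fun v => f v + g v)
  | mul {f g} : SEA f → SEA g → SEA (fun v => f v * g v)

lemma SEA.const (c : ℝ) (hc : 0 < c) : SEA (fun _ : n → ℝ => c) := by
  simpa using SEA.expAffine c hc (fun _ => 0)

lemma SEA.pos {f : (n → ℝ) → ℝ} (hf : SEA f) (v : n → ℝ) : 0 < f v := by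
  induction hf with
  | expAffine c hc w => exact mul_pos hc (Real.exp_pos _)
  | add hf hg ihf ihg => exact add_pos ihf ihg
  | mul hf hg ihf ihg => exact mul_pos ihf ihg

lemma holder2 {p q r s A B : ℝ} (hp : 0 < p) (hq : 0 < q) (hr : 0 < r) (hs : 0 < s)
    (hA : 0 ≤ A) (hB : 0 ≤ B) (hAB : A + B = 1) :
    p ^ A * q ^ B + r ^ A * s ^ B ≤ (p + r) ^ A * (q + s) ^ B := by
  have hpr : (0:ℝ) < p + r := by linarith
  have hqs : (0:ℝ) < q + s := by linarith
  have h1 : ((p+r):ℝ) ^ A ≠ 0 := by positivity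
  have h2 : ((q+s):ℝ) ^ B ≠ 0 := by positivity
  have e1 : p ^ A * q ^ B
      = (p+r) ^ A * (q+s) ^ B * ((p/(p+r)) ^ A * (q/(q+s)) ^ B) := by
    rw [Real.div_rpow hp.le hpr.le, Real.div_rpow hq.le hqs.le]
    field_simp
  have e2 : r ^ A * s ^ B
      = (p+r) ^ A * (q+s) ^ B * ((r/(p+r)) ^ A * (s/(q+s)) ^ B) := by
    rw [Real.div_rpow hr.le hpr.le, Real.div_rpow hs.le hqs.le]
    field_simp
  have g1 : (p/(p+r)) ^ A * (q/(q+s)) ^ B ≤ A * (p/(p+r)) + B * (q/(q+s)) :=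
    Real.geom_mean_le_arith_mean2_weighted hA hB (by positivity) (by positivity) hAB
  have g2 : (r/(p+r)) ^ A * (s/(q+s)) ^ B ≤ A * (r/(p+r)) + B * (s/(q+s)) :=
    Real.geom_mean_le_arith_mean2_weighted hA hB (by positivity) (by positivity) hAB
  have hP : (0:ℝ) < (p+r) ^ A * (q+s) ^ B := by positivity
  calc p ^ A * q ^ B + r ^ A * s ^ B
      = (p+r) ^ A * (q+s) ^ B * ((p/(p+r)) ^ A * (q/(q+s)) ^ B)
        + (p+r) ^ A * (q+s) ^ B * ((r/(p+r)) ^ A * (s/(q+s)) ^ B) := by rw [e1, e2]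
    _ ≤ (p+r) ^ A * (q+s) ^ B * (A * (p/(p+r)) + B * (q/(q+s)))
        + (p+r) ^ A * (q+s) ^ B * (A * (r/(p+r)) + B * (s/(q+s))) :=
        add_le_add (mul_le_mul_of_nonneg_left g1 hP.le) (mul_le_mul_of_nonneg_left g2 hP.le)
    _ = (p+r) ^ A * (q+s) ^ B * (A * ((p+r)/(p+r)) + B * ((q+s)/(q+s))) := by ring
    _ = (p+r) ^ A * (q+s) ^ B := by
        rw [div_self hpr.ne', div_self hqs.ne']
        rw [mul_one, mul_one, hAB, mul_one]

lemma SEA.convexOn_log {f : (n → ℝ) → ℝ} (hf : SEA f) :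
    ConvexOn ℝ (Set.univ : Set (n → ℝ)) (fun v => Real.log (f v)) := by
  induction hf with
  | expAffine c hc w =>
    have he : (fun v : n → ℝ => Real.log (c * Real.exp (∑ j, w j * v j)))
        = fun v => Real.log c + ∑ j, w j * v j := by
      funext v
      rw [Real.log_mul hc.ne' (Real.exp_ne_zero _), Real.log_exp]
    rw [he]
    refine ⟨convex_univ, ?_⟩
    intro x _ y _ A B hA hB hAB
    have hsum : ∑ j, w j * (A • x + B • y) j
        = A * ∑ j, w j * x j + B * ∑ j, w j * y j := by
      simp only [Pi.add_apply, Pi.smul_apply, smul_eq_mul]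
      rw [Finset.mul_sum, Finset.mul_sum, ← Finset.sum_add_distrib]
      exact Finset.sum_congr rfl fun j _ => by ring
    simp only [smul_eq_mul, hsum]
    apply le_of_eq
    linear_combination (Real.log c) * hAB.symm
  | @add f g hf hg ihf ihg =>
    refine ⟨convex_univ, ?_⟩
    intro x _ y _ A B hA hB hAB
    have key : ∀ {h : (n → ℝ) → ℝ}, SEA h →
        ConvexOn ℝ (Set.univ : Set (n → ℝ)) (fun v => Real.log (h v)) →
        h (A • x + B • y) ≤ h x ^ A * h y ^ B := by
      intro h hh ih
      have hlog := ih.2 (Set.mem_univ x) (Set.mem_univ y) hA hB hAB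
      simp only [smul_eq_mul] at hlog
      calc h (A • x + B • y) = Real.exp (Real.log (h (A • x + B • y))) :=
            (Real.exp_log (hh.pos _)).symm
        _ ≤ Real.exp (A * Real.log (h x) + B * Real.log (h y)) := Real.exp_le_exp.2 hlog
        _ = h x ^ A * h y ^ B := by
            rw [Real.exp_add, mul_comm A, mul_comm B,
              ← Real.rpow_def_of_pos (hh.pos x), ← Real.rpow_def_of_pos (hh.pos y)]
    have h1 := key hf ihf
    have h2 := key hg ihg
    have h3 : f (A • x + B • y) + g (A • x + B • y)
        ≤ (f x + g x) ^ A * (f y + g y) ^ B :=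
      le_trans (add_le_add h1 h2)
        (holder2 (hf.pos x) (hf.pos y) (hg.pos x) (hg.pos y) hA hB hAB)
    have hL : (0:ℝ) < f (A • x + B • y) + g (A • x + B • y) :=
      add_pos (hf.pos _) (hg.pos _)
    calc Real.log (f (A • x + B • y) + g (A • x + B • y))
        ≤ Real.log ((f x + g x) ^ A * (f y + g y) ^ B) := Real.log_le_log hL h3
      _ = A * Real.log (f x + g x) + B * Real.log (f y + g y) := by
          rw [Real.log_mul (Real.rpow_pos_of_pos (add_pos (hf.pos x) (hg.pos x)) A).ne'
              (Real.rpow_pos_of_pos (add_pos (hf.pos y) (hg.pos y)) B).ne',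
            Real.log_rpow (add_pos (hf.pos x) (hg.pos x)),
            Real.log_rpow (add_pos (hf.pos y) (hg.pos y))]
      _ = A • Real.log (f x + g x) + B • Real.log (f y + g y) := by
          simp [smul_eq_mul]
  | @mul f g hf hg ihf ihg =>
    have he : (fun v => Real.log (f v * g v))
        = fun v => Real.log (f v) + Real.log (g v) :=
      funext fun v => Real.log_mul (hf.pos v).ne' (hg.pos v).ne'
    rw [he]
    exact ihf.add ihg

end SEA

section SEA2
variable {n : Type*} [Fintype n]

lemma SEA.sum_add {ι : Type*} {s : Finset ι} {F : ι → (n → ℝ) → ℝ} {g : (n → ℝ) → ℝ}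
    (hF : ∀ i ∈ s, SEA (F i)) (hg : SEA g) :
    SEA (fun v => (∑ i ∈ s, F i v) + g v) := by
  classical
  induction s using Finset.induction with
  | empty => simpa using hg
  | @insert i s his ih =>
    have h := SEA.add (hF i (Finset.mem_insert_self i s))
      (ih fun j hj => hF j (Finset.mem_insert_of_mem hj))
    simpa [Finset.sum_insert his, add_assoc] using h

lemma SEA.single {i0 : n} [DecidableEq n] (c e : ℝ) (hc : 0 < c) :
    SEA (fun v : n → ℝ => c * Real.exp (v i0) ^ e) := by
  have h := SEA.expAffine c hc (fun j : n => if j = i0 then e else 0)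
  have he : (fun v : n → ℝ => c * Real.exp (∑ j, (if j = i0 then e else 0) * v j))
      = fun v : n → ℝ => c * Real.exp (v i0) ^ e := by
    funext v
    have : ∑ j, (if j = i0 then e else 0) * v j = v i0 * e := by
      rw [Finset.sum_eq_single i0]
      · simp [mul_comm]
      · intro j _ hj; simp [hj]
      · simp
    rw [this, Real.exp_mul]
  rwa [he] at h

end SEA2

/-- In the mobility-driven epidemic model, the discounted-death objective is convex in
the logarithm of the controls: the function
`G(v) = log (Σ_{t=1}^{T-1} γ_D^t D(t) + γ_∞ D(T))`, where the states are evaluated at the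
controls `u(s) = exp (v(s))` (componentwise, for `s = 0, …, T-1`), is convex on `ℝ^{K·T}`. -/
theorem objective_convexOn_log_scale (K : ℕ) (θ a : Fin K → ℝ)
    (b S0 γA ρEI ρEA ρIR ρIH ρAR ρHR ρHD E0 I0 A0 H0 αD D0 : ℝ)
    (hθ : ∀ k, 0 < θ k) (hb : 0 < b) (hS0 : 0 < S0) (hγA : 0 < γA) (hαD : 0 < αD)
    (hρEI : 0 < ρEI) (hρEA : 0 < ρEA) (hρIR : 0 < ρIR) (hρIH : 0 < ρIH)
    (hρAR : 0 < ρAR) (hρHR : 0 < ρHR) (hρHD : 0 < ρHD)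
    (hEsum : ρEI + ρEA < 1) (hIsum : ρIR + ρIH < 1) (hAsum : ρAR < 1)
    (hHsum : ρHR + ρHD < 1)
    (hE0 : 0 < E0) (hI0 : 0 < I0) (hA0 : 0 < A0) (hH0 : 0 < H0) (hD0 : 0 < D0)
    (T : ℕ) (γD γinf : ℝ) (hγD0 : 0 < γD) (hγD1 : γD < 1) (hγinf : 0 < γinf) :
    ConvexOn ℝ (Set.univ : Set (Fin T × Fin K → ℝ)) (fun v =>
      Real.log (
        (∑ t ∈ Finset.Ico 1 T, γD ^ t *
            epiD K θ a b S0 γA ρEI ρEA ρIR ρIH ρAR ρHR ρHD E0 I0 A0 H0 αD D0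
              (fun s k => Real.exp (if hs : s < T then v (⟨s, hs⟩, k) else 0)) t)
        + γinf *
            epiD K θ a b S0 γA ρEI ρEA ρIR ρIH ρAR ρHR ρHD E0 I0 A0 H0 αD D0
              (fun s k => Real.exp (if hs : s < T then v (⟨s, hs⟩, k) else 0)) T)) := by
  classical
  have hβ : ∀ t : ℕ, SEA (fun v : Fin T × Fin K → ℝ =>
      (∑ k, θ k * Real.exp (if hs : t < T then v (⟨t, hs⟩, k) else 0) ^ a k) + b) := by
    intro t
    refine SEA.sum_add (fun k _ => ?_) (SEA.const b hb)
    by_cases ht : t < T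
    · have h := SEA.single (i0 := ((⟨t, ht⟩ : Fin T), k)) (θ k) (a k) (hθ k)
      have he : (fun v : Fin T × Fin K → ℝ => θ k * Real.exp (v (⟨t, ht⟩, k)) ^ a k)
          = fun v : Fin T × Fin K → ℝ =>
            θ k * Real.exp (if hs : t < T then v (⟨t, hs⟩, k) else 0) ^ a k := by
        funext v; rw [dif_pos ht]
      rwa [he] at h
    · have h := SEA.const (n := Fin T × Fin K) (θ k) (hθ k)
      have he : (fun _ : Fin T × Fin K → ℝ => θ k)
          = fun v : Fin T × Fin K → ℝ =>
            θ k * Real.exp (if hs : t < T then v (⟨t, hs⟩, k) else 0) ^ a k := by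
        funext v; rw [dif_neg ht]; simp
      rwa [he] at h
  have hstate : ∀ t : ℕ,
      SEA (fun v : Fin T × Fin K → ℝ => (epiState K θ a b S0 γA ρEI ρEA ρIR ρIH ρAR ρHR ρHD E0 I0 A0 H0 (fun s k => Real.exp (if hs : s < T then v (⟨s, hs⟩, k) else 0))  t).1) ∧
      SEA (fun v : Fin T × Fin K → ℝ => (epiState K θ a b S0 γA ρEI ρEA ρIR ρIH ρAR ρHR ρHD E0 I0 A0 H0 (fun s k => Real.exp (if hs : s < T then v (⟨s, hs⟩, k) else 0))  t).2.1) ∧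
      SEA (fun v : Fin T × Fin K → ℝ => (epiState K θ a b S0 γA ρEI ρEA ρIR ρIH ρAR ρHR ρHD E0 I0 A0 H0 (fun s k => Real.exp (if hs : s < T then v (⟨s, hs⟩, k) else 0))  t).2.2.1) ∧
      SEA (fun v : Fin T × Fin K → ℝ => (epiState K θ a b S0 γA ρEI ρEA ρIR ρIH ρAR ρHR ρHD E0 I0 A0 H0 (fun s k => Real.exp (if hs : s < T then v (⟨s, hs⟩, k) else 0))  t).2.2.2) := by
    intro t
    induction t with
    | zero =>
      simp only [epiState]
      exact ⟨SEA.const E0 hE0, SEA.const I0 hI0, SEA.const A0 hA0, SEA.const H0 hH0⟩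
    | succ t ih =>
      obtain ⟨hE, hI, hA2, hH⟩ := ih
      have h1 : (0:ℝ) < 1 - ρEI - ρEA := by linarith
      have h2 : (0:ℝ) < 1 - ρIR - ρIH := by linarith
      have h3 : (0:ℝ) < 1 - ρAR := by linarith
      have h4 : (0:ℝ) < 1 - ρHR - ρHD := by linarith
      simp only [epiState]
      exact ⟨((SEA.const _ h1).mul hE).add
          (((SEA.const S0 hS0).mul (hβ t)).mul (((SEA.const γA hγA).mul hA2).add hI)),
        ((SEA.const _ h2).mul hI).add ((SEA.const ρEI hρEI).mul hE),
        ((SEA.const _ h3).mul hA2).add ((SEA.const ρEA hρEA).mul hE),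
        ((SEA.const _ h4).mul hH).add ((SEA.const ρIH hρIH).mul hI)⟩
  have hD : ∀ t : ℕ, SEA (fun v : Fin T × Fin K → ℝ => epiD K θ a b S0 γA ρEI ρEA ρIR ρIH ρAR ρHR ρHD E0 I0 A0 H0 αD D0 (fun s k => Real.exp (if hs : s < T then v (⟨s, hs⟩, k) else 0))  t) := by
    intro t
    induction t with
    | zero => simp only [epiD]; exact SEA.const D0 hD0
    | succ t ih =>
      simp only [epiD]
      exact ih.add ((SEA.const (αD * ρHR) (by positivity)).mul (hstate t).2.2.2)
  refine SEA.convexOn_log ?_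
  exact SEA.sum_add (fun t _ => (SEA.const (γD ^ t) (by positivity)).mul (hD t))
    ((SEA.const γinf hγinf).mul (hD T))
end
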